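/- Let p be a prime, r ≥ 1, and let u = (u_1, …, u_r) ∈ ℤ_p^r be a nonzero tuple with d = min_{1≤i≤r} v_p(u_i). Then for every integer m ≥ d, the Haar probability measure of the set {v = (v_1, …, v_r) ∈ ℤ_p^r : v_p(u_1 v_1 + … + u_r v_r) = m} equals (p − 1) · p^{−(m − d + 1)}. -/

import Mathlib

open MeasureTheory MvPolynomial
open scoped ENNReal

/-- The Borel σ-algebra on the `p`-adic integers. -/
noncomputable instance (p : ℕ) [Fact p.Prime] : MeasurableSpace ℤ_[p] := borel _

instance (p : ℕ) [Fact p.Prime] : BorelSpace ℤ_[p] := ⟨rfl⟩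

/-- The Haar probability measure on `ℤ_[p]` (normalized so that `ℤ_[p]` has measure 1). -/
noncomputable def padicHaar (p : ℕ) [Fact p.Prime] : Measure ℤ_[p] :=
  Measure.addHaarMeasure ⊤

instance (p : ℕ) [Fact p.Prime] : SigmaFinite (padicHaar p) :=
  Measure.sigmaFinite_addHaarMeasure

/-- The Haar probability measure on `ℤ_[p]^n`, as the product of the Haar probability
measures on the factors. -/
noncomputable def padicPiHaar (p : ℕ) [Fact p.Prime] (n : ℕ) :
    Measure (Fin n → ℤ_[p]) :=
  Measure.pi fun _ => padicHaar p

section Aux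

variable (p : ℕ) [hp : Fact p.Prime]

instance : IsProbabilityMeasure (padicHaar p) := by
  constructor
  have := Measure.addHaarMeasure_self (K₀ := (⊤ : TopologicalSpace.PositiveCompacts ℤ_[p]))
  simpa [padicHaar] using this

instance : (padicHaar p).IsAddLeftInvariant := by
  unfold padicHaar
  exact Measure.isAddLeftInvariant_addHaarMeasure _

lemma measurableSet_padicBall (c : ℝ) : MeasurableSet {x : ℤ_[p] | ‖x‖ ≤ c} :=
  (isClosed_le continuous_norm continuous_const).measurableSet

lemma measurableSet_padicSphere (c : ℝ) : MeasurableSet {x : ℤ_[p] | ‖x‖ = c} :=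
  (isClosed_eq continuous_norm continuous_const).measurableSet

lemma padicHaar_ball (j : ℕ) :
    padicHaar p {x : ℤ_[p] | ‖x‖ ≤ (p : ℝ) ^ (-(j : ℤ))} = ((p : ℝ≥0∞) ^ j)⁻¹ := by
  set B := {x : ℤ_[p] | ‖x‖ ≤ (p : ℝ) ^ (-(j : ℤ))} with hB
  have hBm : MeasurableSet B := measurableSet_padicBall p _
  set C : Fin (p ^ j) → Set ℤ_[p] := fun k => (fun x => -((k : ℕ) : ℤ_[p]) + x) ⁻¹' B with hC
  -- each coset has the same measure as B
  have hCB : ∀ k, padicHaar p (C k) = padicHaar p B := fun k =>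
    measure_preimage_add _ _ _
  -- the cosets cover
  have hcover : (⋃ k, C k) = Set.univ := by
    ext x
    simp only [Set.mem_iUnion, Set.mem_univ, iff_true]
    refine ⟨⟨x.appr j, x.appr_lt j⟩, ?_⟩
    show -((x.appr j : ℕ) : ℤ_[p]) + x ∈ B
    rw [hB, Set.mem_setOf_eq, neg_add_eq_sub]
    exact (PadicInt.norm_le_pow_iff_mem_span_pow _ j).2 (x.appr_spec j)
  -- the cosets are disjoint
  have hdisj : Pairwise (Function.onFun Disjoint C) := by
    intro k l hkl
    rw [Function.onFun, Set.disjoint_left]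
    intro x hk hl
    apply hkl
    have hk' : ‖x - ((k : ℕ) : ℤ_[p])‖ ≤ (p : ℝ) ^ (-(j : ℤ)) := by
      have := hk; rw [hC, Set.mem_preimage, hB, Set.mem_setOf_eq, neg_add_eq_sub] at this
      exact this
    have hl' : ‖x - ((l : ℕ) : ℤ_[p])‖ ≤ (p : ℝ) ^ (-(j : ℤ)) := by
      have := hl; rw [hC, Set.mem_preimage, hB, Set.mem_setOf_eq, neg_add_eq_sub] at this
      exact this
    have hsub : ‖(((k : ℕ) : ℤ_[p]) - ((l : ℕ) : ℤ_[p]))‖ ≤ (p : ℝ) ^ (-(j : ℤ)) := by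
      have heq : (((k : ℕ) : ℤ_[p]) - ((l : ℕ) : ℤ_[p]))
          = (x - ((l : ℕ) : ℤ_[p])) + -(x - ((k : ℕ) : ℤ_[p])) := by
        ring
      rw [heq]
      refine le_trans (PadicInt.nonarchimedean _ _) ?_
      rw [norm_neg]
      exact max_le hl' hk'
    have hdvd : ((p : ℤ)) ^ j ∣ ((k : ℕ) : ℤ) - ((l : ℕ) : ℤ) := by
      rw [← PadicInt.norm_int_le_pow_iff_dvd]
      push_cast
      exact hsub
    have hzero : (((k : ℕ) : ℤ) - ((l : ℕ) : ℤ)) = 0 := by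
      refine Int.eq_zero_of_abs_lt_dvd hdvd ?_
      have h1 : ((k : ℕ) : ℤ) < (p : ℤ) ^ j := by exact_mod_cast k.isLt
      have h2 : ((l : ℕ) : ℤ) < (p : ℤ) ^ j := by exact_mod_cast l.isLt
      rw [abs_sub_lt_iff]
      omega
    have : (k : ℕ) = (l : ℕ) := by omega
    exact Fin.ext this
  -- summing up
  have hmeas : ∀ k, MeasurableSet (C k) := fun k =>
    hBm.preimage (measurable_const_add _)
  have hsum : (1 : ℝ≥0∞) = ∑' k : Fin (p ^ j), padicHaar p (C k) := by
    rw [← measure_iUnion hdisj hmeas, hcover, measure_univ]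
  have hval : (1 : ℝ≥0∞) = (p : ℝ≥0∞) ^ j * padicHaar p B := by
    rw [hsum]
    simp only [hCB, tsum_fintype, Finset.sum_const, Finset.card_univ, Fintype.card_fin,
      nsmul_eq_mul]
    push_cast
    ring
  have hne : ((p : ℝ≥0∞) ^ j) ≠ 0 := by
    simp [hp.1.ne_zero]
  have hnt : ((p : ℝ≥0∞) ^ j) ≠ ∞ := by
    simp [ENNReal.pow_ne_top, ENNReal.natCast_ne_top]
  calc padicHaar p B = (((p : ℝ≥0∞) ^ j)⁻¹ * (p : ℝ≥0∞) ^ j) * padicHaar p B := by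
        rw [ENNReal.inv_mul_cancel hne hnt, one_mul]
    _ = ((p : ℝ≥0∞) ^ j)⁻¹ * ((p : ℝ≥0∞) ^ j * padicHaar p B) := by ring
    _ = ((p : ℝ≥0∞) ^ j)⁻¹ := by rw [← hval, mul_one]

lemma padicHaar_sphere (k : ℕ) :
    padicHaar p {x : ℤ_[p] | ‖x‖ = (p : ℝ) ^ (-(k : ℤ))} =
      ((p : ℝ≥0∞) - 1) * ((p : ℝ≥0∞) ^ (k + 1))⁻¹ := by
  have hp1 : (1 : ℝ) < (p : ℝ) := by exact_mod_cast hp.1.one_lt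
  have hset : {x : ℤ_[p] | ‖x‖ = (p : ℝ) ^ (-(k : ℤ))} =
      {x : ℤ_[p] | ‖x‖ ≤ (p : ℝ) ^ (-(k : ℤ))} \
        {x : ℤ_[p] | ‖x‖ ≤ (p : ℝ) ^ (-((k + 1 : ℕ) : ℤ))} := by
    ext x
    simp only [Set.mem_setOf_eq, Set.mem_diff]
    constructor
    · intro h
      refine ⟨le_of_eq h, fun hcon => ?_⟩
      rw [h] at hcon
      have : (-((k + 1 : ℕ) : ℤ)) < (-(k : ℤ)) := by push_cast; omega
      exact absurd hcon (not_le.2 (zpow_lt_zpow_right₀ hp1 this))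
    · rintro ⟨h1, h2⟩
      rcases eq_or_lt_of_le h1 with h | h
      · exact h
      · exfalso
        apply h2
        have := (PadicInt.norm_lt_pow_iff_norm_le_pow_sub_one x (-(k : ℤ))).1 h
        convert this using 2
        push_cast; ring
  rw [hset, measure_diff ?_ ((measurableSet_padicBall p _).nullMeasurableSet) ?_]
  · rw [padicHaar_ball, padicHaar_ball]
    have hpne : (p : ℝ≥0∞) ≠ 0 := by exact_mod_cast hp.1.ne_zero
    have hpnt : (p : ℝ≥0∞) ≠ ∞ := ENNReal.natCast_ne_top p
    have hbnt : ((p : ℝ≥0∞) ^ (k + 1))⁻¹ ≠ ∞ := by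
      simp [pow_ne_zero, hpne]
    refine ENNReal.sub_eq_of_eq_add hbnt ?_
    have h1 : ((p : ℝ≥0∞) - 1) * ((p : ℝ≥0∞) ^ (k + 1))⁻¹ + ((p : ℝ≥0∞) ^ (k + 1))⁻¹
        = (p : ℝ≥0∞) * ((p : ℝ≥0∞) ^ (k + 1))⁻¹ := by
      have : ((p : ℝ≥0∞) - 1) * ((p : ℝ≥0∞) ^ (k + 1))⁻¹ + ((p : ℝ≥0∞) ^ (k + 1))⁻¹
          = (((p : ℝ≥0∞) - 1) + 1) * ((p : ℝ≥0∞) ^ (k + 1))⁻¹ := by ring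
      rw [this, tsub_add_cancel_of_le]
      exact_mod_cast Nat.one_le_cast.2 hp.1.one_lt.le
    rw [h1, pow_succ, ENNReal.mul_inv (Or.inl (pow_ne_zero _ hpne)) (Or.inl (ENNReal.pow_ne_top hpnt))]
    rw [show (p : ℝ≥0∞) * (((p : ℝ≥0∞) ^ k)⁻¹ * (p : ℝ≥0∞)⁻¹)
        = ((p : ℝ≥0∞) ^ k)⁻¹ * ((p : ℝ≥0∞) * (p : ℝ≥0∞)⁻¹) by ring]
    rw [ENNReal.mul_inv_cancel hpne hpnt, mul_one]
  · intro x hx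
    simp only [Set.mem_setOf_eq] at hx ⊢
    refine le_trans hx (zpow_le_zpow_right₀ hp1.le ?_)
    push_cast; omega
  · exact measure_ne_top _ _

lemma padicHaar_fiber (d m : ℕ) (hm : d ≤ m) (a c : ℤ_[p])
    (ha : ‖a‖ = (p : ℝ) ^ (-(d : ℤ))) (hc : ‖c‖ ≤ (p : ℝ) ^ (-(d : ℤ))) :
    padicHaar p {t : ℤ_[p] | ‖a * t + c‖ = (p : ℝ) ^ (-(m : ℤ))} =
      ((p : ℝ≥0∞) - 1) * ((p : ℝ≥0∞) ^ ((m - d) + 1))⁻¹ := by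
  have hp0 : (0 : ℝ) < (p : ℝ) := by exact_mod_cast hp.1.pos
  have hp1 : (1 : ℝ) < (p : ℝ) := by exact_mod_cast hp.1.one_lt
  have ha0 : a ≠ 0 := by
    intro h
    rw [h, norm_zero] at ha
    exact absurd ha.symm (ne_of_gt (zpow_pos hp0 _))
  have hval : a.valuation = (d : ℤ) := by
    have h1 := PadicInt.norm_eq_zpow_neg_valuation ha0
    rw [ha] at h1
    have := zpow_right_injective₀ hp0 (ne_of_gt hp1) h1
    omega
  obtain ⟨c', hc'⟩ : ∃ c', c = (p : ℤ_[p]) ^ d * c' := by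
    have h1 := (PadicInt.norm_le_pow_iff_mem_span_pow c d).1 hc
    rw [Ideal.mem_span_singleton] at h1
    exact h1
  set ε := PadicInt.unitCoeff ha0 with hε
  have hspec : a = (ε : ℤ_[p]) * (p : ℤ_[p]) ^ d := by
    have := PadicInt.unitCoeff_spec ha0
    rwa [show a.valuation = d by exact_mod_cast hval] at this
  set t₀ : ℤ_[p] := -(((ε⁻¹ : ℤ_[p]ˣ) : ℤ_[p]) * c') with ht₀def
  have hunit : (ε : ℤ_[p]) * ((ε⁻¹ : ℤ_[p]ˣ) : ℤ_[p]) = 1 := by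
    exact_mod_cast ε.mul_inv
  have ht₀ : a * t₀ + c = 0 := by
    rw [hspec, hc', ht₀def]
    linear_combination (-((p : ℤ_[p]) ^ d * c')) * hunit
  have key : ∀ t : ℤ_[p], a * t + c = a * (t - t₀) := by
    intro t
    linear_combination ht₀
  have hmd : ((m - d : ℕ) : ℤ) = (m : ℤ) - (d : ℤ) := by omega
  have hmul : (p : ℝ) ^ (-(d : ℤ)) * (p : ℝ) ^ (-((m - d : ℕ) : ℤ)) = (p : ℝ) ^ (-(m : ℤ)) := by
    rw [← zpow_add₀ (ne_of_gt hp0)]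
    congr 1
    omega
  have hsetEq : {t : ℤ_[p] | ‖a * t + c‖ = (p : ℝ) ^ (-(m : ℤ))}
      = (fun t => -t₀ + t) ⁻¹' {s : ℤ_[p] | ‖s‖ = (p : ℝ) ^ (-((m - d : ℕ) : ℤ))} := by
    ext t
    simp only [Set.mem_setOf_eq, Set.mem_preimage, neg_add_eq_sub]
    rw [key t, norm_mul, ha]
    constructor
    · intro h
      apply mul_left_cancel₀ (ne_of_gt (zpow_pos hp0 (-(d : ℤ))))
      rw [h, hmul]
    · intro h
      rw [h, hmul]
  rw [hsetEq, measure_preimage_add, padicHaar_sphere]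

end Aux

/-- for a nonzero `u ∈ ℤ_p^r` with `d = min_i v_p(u_i)` (encoded via the
`p`-adic norm: `‖u i‖ ≤ p^(-d)` for all `i`, with equality for some `i`), for every `m ≥ d`
the Haar measure of `{v ∈ ℤ_p^r : v_p(∑ u_i v_i) = m}` equals `(p-1) p^(-(m-d+1))`.
(The condition `v_p(w) = m` is expressed as `‖w‖ = p^(-m)`.) -/
theorem measure_level_set_linear_form
    (p : ℕ) [Fact p.Prime] (r : ℕ) (hr : 1 ≤ r)
    (u : Fin r → ℤ_[p]) (hu : u ≠ 0) (d : ℕ)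
    (hd : ∀ i, ‖u i‖ ≤ (p : ℝ) ^ (-(d : ℤ)))
    (hd' : ∃ i, ‖u i‖ = (p : ℝ) ^ (-(d : ℤ)))
    (m : ℕ) (hm : d ≤ m) :
    padicPiHaar p r {v : Fin r → ℤ_[p] | ‖∑ i, u i * v i‖ = (p : ℝ) ^ (-(m : ℤ))} =
      ((p : ℝ≥0∞) - 1) * (p : ℝ≥0∞) ^ (-((m : ℤ) - (d : ℤ) + 1)) := by
  have hp := (Fact.out : p.Prime)
  obtain ⟨n, rfl⟩ : ∃ n, r = n + 1 := ⟨r - 1, by omega⟩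
  obtain ⟨i0, hi0⟩ := hd'
  set S' : Set (ℤ_[p] × (Fin n → ℤ_[p])) :=
    {q | ‖u i0 * q.1 + ∑ j, u (i0.succAbove j) * q.2 j‖ = (p : ℝ) ^ (-(m : ℤ))} with hS'
  have hcont : Continuous fun q : ℤ_[p] × (Fin n → ℤ_[p]) =>
      u i0 * q.1 + ∑ j, u (i0.succAbove j) * q.2 j := by
    apply Continuous.add
    · exact continuous_const.mul continuous_fst
    · apply continuous_finset_sum
      intro j _
      exact continuous_const.mul ((continuous_apply j).comp continuous_snd)
  have hS'm : MeasurableSet S' := (isClosed_eq hcont.norm continuous_const).measurableSet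
  have hpre : (MeasurableEquiv.piFinSuccAbove (fun _ : Fin (n + 1) => ℤ_[p]) i0) ⁻¹' S' =
      {v : Fin (n + 1) → ℤ_[p] | ‖∑ i, u i * v i‖ = (p : ℝ) ^ (-(m : ℤ))} := by
    ext v
    simp only [Set.mem_preimage, Set.mem_setOf_eq, hS', MeasurableEquiv.piFinSuccAbove,
      MeasurableEquiv.coe_mk, Fin.insertNthEquiv, Equiv.coe_fn_symm_mk, Fin.removeNth]
    rw [Fin.sum_univ_succAbove (fun i => u i * v i) i0]
  have hmp := measurePreserving_piFinSuccAbove (fun _ : Fin (n + 1) => padicHaar p) i0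
  have step1 : padicPiHaar p (n + 1)
      {v : Fin (n + 1) → ℤ_[p] | ‖∑ i, u i * v i‖ = (p : ℝ) ^ (-(m : ℤ))}
      = ((padicHaar p).prod (Measure.pi fun _ : Fin n => padicHaar p)) S' := by
    rw [← hpre]
    exact hmp.measure_preimage hS'm.nullMeasurableSet
  rw [step1, Measure.prod_apply_symm hS'm]
  have hfiber : ∀ w : Fin n → ℤ_[p],
      padicHaar p ((fun t => (t, w)) ⁻¹' S')
        = ((p : ℝ≥0∞) - 1) * ((p : ℝ≥0∞) ^ ((m - d) + 1))⁻¹ := by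
    intro w
    have hc : ‖∑ j, u (i0.succAbove j) * w j‖ ≤ (p : ℝ) ^ (-(d : ℤ)) := by
      rw [PadicInt.norm_le_pow_iff_mem_span_pow]
      apply Ideal.sum_mem
      intro j _
      rw [← PadicInt.norm_le_pow_iff_mem_span_pow]
      calc ‖u (i0.succAbove j) * w j‖ = ‖u (i0.succAbove j)‖ * ‖w j‖ :=
            norm_mul _ _
        _ ≤ (p : ℝ) ^ (-(d : ℤ)) * 1 := by
            apply mul_le_mul (hd _) (PadicInt.norm_le_one _) (norm_nonneg _)
            positivity
        _ = (p : ℝ) ^ (-(d : ℤ)) := mul_one _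
    have hpreq : (fun t => (t, w)) ⁻¹' S'
        = {t : ℤ_[p] | ‖u i0 * t + ∑ j, u (i0.succAbove j) * w j‖ = (p : ℝ) ^ (-(m : ℤ))} := rfl
    rw [hpreq]
    exact padicHaar_fiber p d m hm (u i0) _ hi0 hc
  simp only [hfiber]
  rw [lintegral_const, measure_univ, mul_one]
  congr 1
  have hpne : (p : ℝ≥0∞) ≠ 0 := by exact_mod_cast hp.ne_zero
  have hpnt : (p : ℝ≥0∞) ≠ ∞ := ENNReal.natCast_ne_top p
  rw [show ((m : ℤ) - (d : ℤ) + 1) = (((m - d) + 1 : ℕ) : ℤ) by push_cast; omega]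
  rw [ENNReal.zpow_neg, zpow_natCast]
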